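/- For every odd integer d ≥ 5 and every integer s with 1 ≤ s ≤ d−3, there exists a d-regular connected Cayley graph G of order υ(G) such that λ'(G) = d+s < υ(G)/2. -/

import Mathlib

open SimpleGraph

section Defs

variable {V : Type*}

/-- The set of edges of `G` with one endpoint in `X` and the other outside `X`. -/
def edgeBoundary (G : SimpleGraph V) (X : Set V) : Set (Sym2 V) :=
  {e | e ∈ G.edgeSet ∧ ∃ u ∈ X, ∃ v ∈ Xᶜ, e = s(u, v)}

/-- The edge-connectivity `λ(G)`: the minimum number of edges whose removal disconnects `G`. -/
noncomputable def edgeConn (G : SimpleGraph V) : ℕ :=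
  sInf {k | ∃ F : Set (Sym2 V), F ⊆ G.edgeSet ∧ F.ncard = k ∧ ¬(G.deleteEdges F).Connected}

/-- `F` is a restricted edge-cut of `G`: removing `F` disconnects `G` and leaves no
isolated vertices. -/
def IsRestrictedEdgeCut (G : SimpleGraph V) (F : Set (Sym2 V)) : Prop :=
  F ⊆ G.edgeSet ∧ ¬(G.deleteEdges F).Connected ∧ ∀ v : V, ∃ w : V, (G.deleteEdges F).Adj v w

/-- The restricted edge-connectivity `λ'(G)`. -/
noncomputable def restrictedEdgeConn (G : SimpleGraph V) : ℕ :=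
  sInf {k | ∃ F : Set (Sym2 V), IsRestrictedEdgeCut G F ∧ F.ncard = k}

/-- The vertex-connectivity `κ(G)`: the minimum size of a set of vertices whose removal
leaves a disconnected graph or a graph with at most one vertex. -/
noncomputable def vertexConn (G : SimpleGraph V) : ℕ :=
  sInf {k | ∃ S : Set V, S.ncard = k ∧
    (¬(G.induce (Sᶜ : Set V)).Connected ∨ (Sᶜ : Set V).ncard ≤ 1)}

/-- The minimum edge-degree `ξ(G) = min {d(u) + d(v) - 2 : uv ∈ E(G)}`. -/
noncomputable def minEdgeDegree (G : SimpleGraph V) : ℕ :=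
  sInf {k | ∃ u v : V, G.Adj u v ∧ (G.neighborSet u).ncard + (G.neighborSet v).ncard - 2 = k}

/-- `G` is `λ'`-optimal if `λ'(G) = ξ(G)`. -/
def LambdaPrimeOptimal (G : SimpleGraph V) : Prop :=
  restrictedEdgeConn G = minEdgeDegree G

/-- The replacement product of `G1` and `G2` with respect to an edge-labelling `ℓ`,
where `ℓ x i` is the other endpoint of the edge of `G1` labelled `i` at the vertex `x`.
Vertices `(x, i)` and `(y, j)` are adjacent iff either `x = y` and `i j ∈ E(G2)`, or
`x y ∈ E(G1)` and the edge `x y` is labelled `i` at `x` and `j` at `y`. -/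
def replacementProduct {V1 V2 : Type*} (G1 : SimpleGraph V1) (G2 : SimpleGraph V2)
    (ℓ : V1 → V2 → V1) : SimpleGraph (V1 × V2) where
  Adj p q := (p.1 = q.1 ∧ G2.Adj p.2 q.2) ∨
    (G1.Adj p.1 q.1 ∧ ℓ p.1 p.2 = q.1 ∧ ℓ q.1 q.2 = p.1)
  symm := by
    constructor
    rintro p q (⟨h1, h2⟩ | ⟨h1, h2, h3⟩)
    · exact Or.inl ⟨h1.symm, h2.symm⟩
    · exact Or.inr ⟨h1.symm, h3, h2⟩
  loopless := by
    constructor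
    rintro p (⟨_, h⟩ | ⟨h, _⟩)
    · exact G2.ne_of_adj h rfl
    · exact G1.ne_of_adj h rfl

/-- `ℓ` is a valid edge-labelling of `G1` for the replacement product:
for each vertex `x`, `ℓ x` is injective and `ℓ x i` is always a neighbour of `x`
(hence `ℓ x` enumerates the neighbours of `x` when `G1` is `|V2|`-regular). -/
def IsRPLabelling {V1 V2 : Type*} (G1 : SimpleGraph V1) (ℓ : V1 → V2 → V1) : Prop :=
  (∀ x, Function.Injective (ℓ x)) ∧ ∀ x i, G1.Adj x (ℓ x i)

end Defs

/-- The (undirected) Cayley graph of a group `Γ` with connection set `S`: vertices are the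
elements of `Γ`, and distinct `x, y` are adjacent iff `x⁻¹ * y ∈ S` (or symmetrically
`y⁻¹ * x ∈ S`; when `S = S⁻¹` the two conditions agree). -/
def cayleyGraph {Γ : Type*} [Group Γ] (S : Set Γ) : SimpleGraph Γ where
  Adj x y := x ≠ y ∧ (x⁻¹ * y ∈ S ∨ y⁻¹ * x ∈ S)
  symm := by
    constructor
    rintro x y ⟨h1, h2⟩
    exact ⟨h1.symm, h2.symm⟩
  loopless := by
    constructor
    rintro x ⟨h, -⟩
    exact h rfl

set_option linter.unusedSectionVars false
set_option linter.unusedVariables false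
set_option maxHeartbeats 1000000
section Thm19Aux
open Finset
namespace Thm19


/-- The base "hypercube coordinate" space. -/
abbrev Amb (c : ℕ) := ZMod c → ZMod 2

/-- The vertex/group type: semidirect product `(ZMod c → ZMod 2) ⋊ ZMod c`. -/
structure W (c : ℕ) where
  a : Amb c
  h : ZMod c

variable {c : ℕ}

def wEquiv (c : ℕ) : W c ≃ (Amb c × ZMod c) where
  toFun g := (g.a, g.h)
  invFun p := ⟨p.1, p.2⟩
  left_inv _ := rfl
  right_inv _ := rfl

instance [NeZero c] : Fintype (W c) := Fintype.ofEquiv _ (wEquiv c).symm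
instance [NeZero c] : DecidableEq (W c) := (wEquiv c).decidableEq

@[ext] lemma W.ext {x y : W c} (h1 : x.a = y.a) (h2 : x.h = y.h) : x = y := by
  cases x; cases y; cases h1; cases h2; rfl

/-- shift of a function by `h`. -/
def shf (h : ZMod c) (b : Amb c) : Amb c := fun i => b (i - h)

lemma z2_add_self (x : ZMod 2) : x + x = 0 := by
  revert x; decide

instance : Group (W c) where
  mul x y := ⟨x.a + shf x.h y.a, x.h + y.h⟩
  one := ⟨0, 0⟩
  inv x := ⟨shf (-x.h) x.a, -x.h⟩
  mul_assoc x y z := by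
    show W.mk _ _ = W.mk _ _
    congr 1
    · funext i
      show (x.a + shf x.h y.a) i + (shf (x.h + y.h) z.a) i
          = x.a i + shf x.h (y.a + shf y.h z.a) i
      simp only [Pi.add_apply, shf]
      have : i - (x.h + y.h) = i - x.h - y.h := by ring
      rw [this, add_assoc]
    · show x.h + y.h + z.h = x.h + (y.h + z.h); ring
  one_mul x := by
    show W.mk _ _ = x
    cases x with | mk a h =>
    congr 1
    · funext i; show (0:ZMod 2) + a (i - 0) = a i; simp
    · show 0 + h = h; ring
  mul_one x := by
    show W.mk _ _ = x
    cases x with | mk a h =>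
    congr 1
    · funext i; show a i + (0:ZMod 2) = a i; simp [shf]
    · show h + 0 = h; ring
  inv_mul_cancel x := by
    show W.mk _ _ = W.mk _ _
    cases x with | mk a h =>
    congr 1
    · funext i
      show shf (-h) a i + shf (-h) a i = (0 : ZMod 2)
      exact z2_add_self _
    · show -h + h = 0; ring

lemma mul_def (x y : W c) : x * y = ⟨x.a + shf x.h y.a, x.h + y.h⟩ := rfl
lemma one_def : (1 : W c) = ⟨0, 0⟩ := rfl
lemma inv_def (x : W c) : x⁻¹ = ⟨shf (-x.h) x.a, -x.h⟩ := rfl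

def eA (h : ZMod c) : Amb c := fun i => if i = h then 1 else 0

lemma eA_apply_self (h : ZMod c) : eA h h = 1 := by simp [eA]
lemma eA_ne_zero (h : ZMod c) : eA h ≠ 0 := by
  intro hc
  have := congrFun hc h
  simp [eA] at this

lemma eA_add_self (h : ZMod c) : eA h + eA h = 0 := by
  funext i; show eA h i + eA h i = 0
  revert i; intro i; exact (by revert i; intro i; exact (by
    have : ∀ x : ZMod 2, x + x = 0 := by decide
    exact this _))

def Tf (c r : ℕ) : Finset (ZMod c) :=
  ((Finset.Icc 1 r).image fun i : ℕ => (i : ZMod c)) ∪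
  ((Finset.Icc 1 r).image fun i : ℕ => -(i : ZMod c))

variable {r : ℕ}

lemma natCast_injOn_Icc (hrc : r < c) : Set.InjOn (fun i : ℕ => (i : ZMod c)) (Finset.Icc 1 r) := by
  intro i hi j hj hij
  simp only [coe_Icc, Set.mem_Icc] at hi hj
  haveI : NeZero c := ⟨by omega⟩
  have hi' : i < c := by omega
  have hj' : j < c := by omega
  have := congrArg ZMod.val hij
  simpa [ZMod.val_cast_of_lt hi', ZMod.val_cast_of_lt hj'] using this

lemma zero_not_mem_Tf (hrc : r < c) : (0 : ZMod c) ∉ Tf c r := by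
  haveI : NeZero c := ⟨by omega⟩
  intro h0
  simp only [Tf, mem_union, mem_image, mem_Icc] at h0
  rcases h0 with ⟨i, hi, hcast⟩ | ⟨i, hi, hcast⟩
  · have : (i : ZMod c) = 0 := hcast
    rw [ZMod.natCast_eq_zero_iff] at this
    have := Nat.le_of_dvd (by omega) this
    omega
  · have : (i : ZMod c) = 0 := neg_eq_zero.mp hcast
    rw [ZMod.natCast_eq_zero_iff] at this
    have := Nat.le_of_dvd (by omega) this
    omega

lemma neg_mem_Tf {t : ZMod c} (ht : t ∈ Tf c r) : -t ∈ Tf c r := by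
  simp only [Tf, mem_union, mem_image] at ht ⊢
  rcases ht with ⟨i, hi, hcast⟩ | ⟨i, hi, hcast⟩
  · exact Or.inr ⟨i, hi, by rw [hcast]⟩
  · exact Or.inl ⟨i, hi, by rw [← hcast, neg_neg]⟩

lemma card_Tf (h2rc : 2 * r < c) : (Tf c r).card = 2 * r := by
  haveI : NeZero c := ⟨by omega⟩
  have hrc : r < c := by omega
  have h1 : ((Finset.Icc 1 r).image fun i : ℕ => (i : ZMod c)).card = r := by
    rw [Finset.card_image_of_injOn (natCast_injOn_Icc hrc)]
    simp
  have h2 : ((Finset.Icc 1 r).image fun i : ℕ => -(i : ZMod c)).card = r := by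
    rw [Finset.card_image_of_injOn ?_]
    · simp
    · intro i hi j hj hij
      simp only at hij
      exact natCast_injOn_Icc hrc hi hj (by
        have := congrArg Neg.neg hij
        simpa using this)
  have hdisj : Disjoint ((Finset.Icc 1 r).image fun i : ℕ => (i : ZMod c))
      ((Finset.Icc 1 r).image fun i : ℕ => -(i : ZMod c)) := by
    rw [Finset.disjoint_left]
    rintro x hx hx'
    simp only [mem_image, mem_Icc] at hx hx'
    obtain ⟨i, hi, rfl⟩ := hx
    obtain ⟨j, hj, hji⟩ := hx'
    have : ((j + i : ℕ) : ZMod c) = 0 := by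
      push_cast
      rw [← hji]; ring
    rw [ZMod.natCast_eq_zero_iff] at this
    have := Nat.le_of_dvd (by omega) this
    omega
  rw [Tf, Finset.card_union_of_disjoint hdisj, h1, h2]; omega

lemma one_cast_mem_Tf (hr : 1 ≤ r) : (1 : ZMod c) ∈ Tf c r := by
  simp only [Tf, mem_union, mem_image]
  exact Or.inl ⟨1, by simp [hr], by simp⟩


/-! ### The generating set -/

section Gen
variable [NeZero c]

/-- the cross involution -/
def sg (c : ℕ) : W c := ⟨eA 0, 0⟩

def Sf (c r : ℕ) [NeZero c] : Finset (W c) :=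
  ((Tf c r).image fun t => (⟨0, t⟩ : W c)) ∪ {sg c}

lemma shf_eA (h k : ZMod c) : shf h (eA k) = eA (k + h) := by
  funext i
  simp only [shf, eA]
  congr 1
  simp only [eq_iff_iff]
  constructor <;> intro hh
  · rw [← hh]; ring
  · rw [hh]; ring

lemma mul_t (x : W c) (t : ZMod c) : x * ⟨0, t⟩ = ⟨x.a, x.h + t⟩ := by
  rw [mul_def]
  congr 1
  show x.a + shf x.h 0 = x.a
  have : shf x.h (0 : Amb c) = 0 := rfl
  rw [this, add_zero]

lemma mul_sg (x : W c) : x * sg c = ⟨x.a + eA x.h, x.h⟩ := by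
  rw [mul_def, sg]
  congr 1
  · show x.a + shf x.h (eA 0) = x.a + eA x.h
    rw [shf_eA, zero_add]
  · show x.h + 0 = x.h; ring

lemma sg_mem_Sf : sg c ∈ Sf c r := by simp [Sf]

lemma t_mem_Sf {t : ZMod c} (ht : t ∈ Tf c r) : (⟨0, t⟩ : W c) ∈ Sf c r := by
  simp only [Sf, mem_union, mem_image]
  exact Or.inl ⟨t, ht, rfl⟩

lemma mem_Sf_elim {x : W c} (hx : x ∈ Sf c r) :
    (x.a = 0 ∧ x.h ∈ Tf c r) ∨ x = sg c := by
  simp only [Sf, mem_union, mem_image, mem_singleton] at hx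
  rcases hx with ⟨t, ht, rfl⟩ | h
  · exact Or.inl ⟨rfl, ht⟩
  · exact Or.inr h

lemma one_not_mem_Sf (hrc : r < c) : (1 : W c) ∉ Sf c r := by
  intro h
  rcases mem_Sf_elim h with ⟨_, ht⟩ | h
  · exact zero_not_mem_Tf hrc (by simpa [one_def] using ht)
  · have : (1 : W c).a = (sg c).a := by rw [h]
    exact eA_ne_zero 0 (by simp only [one_def, sg] at this; exact this.symm)

lemma sg_mul_sg : sg c * sg c = 1 := by
  rw [mul_sg]
  simp only [sg]
  rw [one_def]
  congr 1
  exact eA_add_self 0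

lemma inv_mem_Sf {x : W c} (hx : x ∈ Sf c r) : x⁻¹ ∈ Sf c r := by
  rcases mem_Sf_elim hx with ⟨ha, ht⟩ | h
  · obtain ⟨a, h⟩ := x
    simp only at ha ht
    subst ha
    have : (⟨0, h⟩ : W c)⁻¹ = ⟨0, -h⟩ := by
      rw [inv_def]
      exact W.ext rfl rfl
    rw [this]
    exact t_mem_Sf (neg_mem_Tf ht)
  · subst h
    rw [inv_eq_of_mul_eq_one_right sg_mul_sg]
    exact sg_mem_Sf

lemma card_Sf (hr : 1 ≤ r) (h2rc : 2 * r < c) : (Sf c r).card = 2 * r + 1 := by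
  rw [Sf, Finset.card_union_of_disjoint, Finset.card_image_of_injective, card_Tf h2rc,
    Finset.card_singleton]
  · intro t t' htt
    have := congrArg W.h htt
    exact this
  · rw [Finset.disjoint_right]
    intro x hx hx'
    simp only [mem_singleton] at hx
    subst hx
    simp only [mem_image] at hx'
    obtain ⟨t, _, hts⟩ := hx'
    have := congrArg W.a hts
    simp only [sg] at this
    exact eA_ne_zero 0 this.symm

end Gen


/-! ### The Cayley graph -/

section Graph
variable [NeZero c]

def SS (c r : ℕ) [NeZero c] : Set (W c) := ↑(Sf c r)

lemma SS_eq_inv : SS c r = (SS c r)⁻¹ := by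
  ext x
  simp only [SS, Set.mem_inv, Finset.mem_coe]
  constructor
  · intro h
    simpa using inv_mem_Sf h
  · intro h
    simpa using inv_mem_Sf h

lemma adj_iff (hrc : r < c) {x y : W c} :
    (cayleyGraph (SS c r)).Adj x y ↔ x⁻¹ * y ∈ Sf c r := by
  constructor
  · rintro ⟨hne, h | h⟩
    · exact h
    · have := inv_mem_Sf (show y⁻¹ * x ∈ Sf c r from h)
      simpa [mul_inv_rev] using this
  · intro h
    refine ⟨?_, Or.inl h⟩
    rintro rfl
    rw [inv_mul_cancel] at h
    exact one_not_mem_Sf hrc h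

lemma adj_mul (hrc : r < c) (x : W c) {t : W c} (ht : t ∈ Sf c r) :
    (cayleyGraph (SS c r)).Adj x (x * t) := by
  rw [adj_iff hrc]
  simpa using ht

lemma adj_iff' (hrc : r < c) {x y : W c} :
    (cayleyGraph (SS c r)).Adj x y ↔ ∃ t ∈ Sf c r, y = x * t := by
  rw [adj_iff hrc]
  constructor
  · intro h
    exact ⟨x⁻¹ * y, h, by group⟩
  · rintro ⟨t, ht, rfl⟩
    simpa using ht

lemma neighborSet_ncard (hrc : r < c) (x : W c) :
    ((cayleyGraph (SS c r)).neighborSet x).ncard = (Sf c r).card := by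
  have : (cayleyGraph (SS c r)).neighborSet x = (fun t => x * t) '' (SS c r) := by
    ext y
    rw [SimpleGraph.mem_neighborSet, adj_iff' hrc, Set.mem_image]
    constructor
    · rintro ⟨t, ht, rfl⟩
      exact ⟨t, Finset.mem_coe.mpr ht, rfl⟩
    · rintro ⟨t, ht, rfl⟩
      exact ⟨t, Finset.mem_coe.mp ht, rfl⟩
  rw [this, Set.ncard_image_of_injective _ (mul_right_injective x), SS, Set.ncard_coe_finset]

/-! ### Connectivity -/

lemma reach_height (hr : 1 ≤ r) (hrc : r < c) (x : W c) (h' : ZMod c) :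
    (cayleyGraph (SS c r)).Reachable x ⟨x.a, h'⟩ := by
  have key : ∀ k : ℕ, (cayleyGraph (SS c r)).Reachable x ⟨x.a, x.h + (k : ZMod c)⟩ := by
    intro k
    induction k with
    | zero => simp only [Nat.cast_zero, add_zero]; exact SimpleGraph.Reachable.refl _
    | succ n ih =>
      refine ih.trans ?_
      have hadj := adj_mul hrc (⟨x.a, x.h + (n : ZMod c)⟩ : W c) (t_mem_Sf (one_cast_mem_Tf hr))
      rw [mul_t] at hadj
      have : x.h + (n : ZMod c) + 1 = x.h + ((n+1 : ℕ) : ZMod c) := by push_cast; ring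
      rw [this] at hadj
      exact hadj.reachable
  have := key (h' - x.h).val
  rwa [ZMod.natCast_val, ZMod.cast_id, add_sub_cancel] at this

lemma reach_flip (hrc : r < c) (x : W c) :
    (cayleyGraph (SS c r)).Reachable x ⟨x.a + eA x.h, x.h⟩ := by
  have hadj := adj_mul hrc x (sg_mem_Sf (r := r))
  rw [mul_sg] at hadj
  exact hadj.reachable

lemma reach_one (hr : 1 ≤ r) (hrc : r < c) (x : W c) :
    (cayleyGraph (SS c r)).Reachable x 1 := by
  suffices h : ∀ (n : ℕ) (a : Amb c) (h : ZMod c),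
      (Finset.univ.filter fun i => a i ≠ 0).card = n →
      (cayleyGraph (SS c r)).Reachable ⟨a, h⟩ 1 by
    exact h _ x.a x.h rfl
  intro n
  induction n with
  | zero =>
    intro a h hcard
    have ha : a = 0 := by
      funext i
      by_contra hi
      have : i ∈ Finset.univ.filter fun i => a i ≠ 0 := by simpa using hi
      rw [Finset.card_eq_zero] at hcard
      simp [hcard] at this
    subst ha
    have := reach_height hr hrc (⟨0, h⟩ : W c) 0
    exact this
  | succ n ih =>
    intro a h hcard
    have hne : (Finset.univ.filter fun i => a i ≠ 0).Nonempty := by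
      rw [← Finset.card_pos, hcard]; omega
    obtain ⟨i, hi⟩ := hne
    simp only [Finset.mem_filter, Finset.mem_univ, true_and] at hi
    have r1 : (cayleyGraph (SS c r)).Reachable ⟨a, h⟩ ⟨a, i⟩ := reach_height hr hrc _ _
    have r2 : (cayleyGraph (SS c r)).Reachable ⟨a, i⟩ ⟨a + eA i, i⟩ := reach_flip hrc _
    refine (r1.trans r2).trans (ih (a + eA i) i ?_)
    have hset : (Finset.univ.filter fun j => (a + eA i) j ≠ 0)
        = (Finset.univ.filter fun j => a j ≠ 0).erase i := by
      ext j
      simp only [Finset.mem_filter, Finset.mem_univ, true_and, Finset.mem_erase]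
      by_cases hji : j = i
      · subst hji
        have hai : a j = 1 := by
          have : ∀ x : ZMod 2, x ≠ 0 → x = 1 := by decide
          exact this _ hi
        have h11 : (1 : ZMod 2) + 1 = 0 := by decide
        simp [Pi.add_apply, hai, eA_apply_self, h11]
      · simp only [Pi.add_apply, eA]
        rw [if_neg hji]
        simp [hji]
    rw [hset, Finset.card_erase_of_mem (by simpa using hi), hcard]
    rfl

lemma graph_connected (hr : 1 ≤ r) (hrc : r < c) : (cayleyGraph (SS c r)).Connected := by
  constructor
  intro u v
  exact (reach_one hr hrc u).trans (reach_one hr hrc v).symm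

end Graph

/-! ### The upper bound cut -/

section Upper
variable [NeZero c]

def F0 (c : ℕ) : Set (Sym2 (W c)) :=
  (fun h : ZMod c => s((⟨0, h⟩ : W c), (⟨eA h, h⟩ : W c))) '' Set.univ

lemma cluster_mul_sg (h : ZMod c) : (⟨0, h⟩ : W c) * sg c = ⟨eA h, h⟩ := by
  rw [mul_sg]
  congr 1
  exact zero_add _

lemma F0_subset (hrc : r < c) : F0 c ⊆ (cayleyGraph (SS c r)).edgeSet := by
  rintro e ⟨h, -, rfl⟩
  rw [SimpleGraph.mem_edgeSet, ← cluster_mul_sg]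
  exact adj_mul hrc _ (sg_mem_Sf (r := r))

lemma F0_ncard : (F0 c).ncard = c := by
  rw [F0, Set.ncard_image_of_injective _ ?_, Set.ncard_univ, Nat.card_eq_fintype_card,
    ZMod.card]
  intro h h' hhh
  simp only [Sym2.eq_iff] at hhh
  rcases hhh with ⟨h1, -⟩ | ⟨h1, h2⟩
  · exact congrArg W.h h1
  · exact absurd (congrArg W.a h1).symm (eA_ne_zero h')

lemma zmod2_eq_of_add_eq_zero {x y : ZMod 2} (h : x + y = 0) : x = y := by
  revert x y; decide

lemma amb_eq_of_add_eq_zero {x y : Amb c} (h : x + y = 0) : x = y := by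
  funext i
  exact zmod2_eq_of_add_eq_zero (congrFun h i)

lemma del_adj_pred (hrc : r < c) {x y : W c}
    (hxy : ((cayleyGraph (SS c r)).deleteEdges (F0 c)).Adj x y) : (x.a = 0 ↔ y.a = 0) := by
  rw [SimpleGraph.deleteEdges_adj] at hxy
  obtain ⟨hadj, hne⟩ := hxy
  rw [adj_iff' hrc] at hadj
  obtain ⟨t, ht, rfl⟩ := hadj
  rcases mem_Sf_elim ht with ⟨ha, ht'⟩ | rfl
  · obtain ⟨ta, th⟩ := t
    simp only at ha
    subst ha
    rw [mul_t]
  · rw [mul_sg]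
    show x.a = 0 ↔ x.a + eA x.h = 0
    constructor
    · intro hx0
      exfalso
      apply hne
      refine ⟨x.h, Set.mem_univ _, ?_⟩
      show s((⟨0, x.h⟩ : W c), (⟨eA x.h, x.h⟩ : W c)) = s(x, x * sg c)
      rw [mul_sg, Sym2.eq_iff]
      refine Or.inl ⟨(show x = (⟨0, x.h⟩ : W c) from W.ext hx0 rfl).symm, ?_⟩
      exact W.ext (show eA x.h = x.a + eA x.h by rw [hx0, zero_add]) rfl
    · intro hy0
      exfalso
      apply hne
      have hxa : x.a = eA x.h := amb_eq_of_add_eq_zero hy0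
      refine ⟨x.h, Set.mem_univ _, ?_⟩
      show s((⟨0, x.h⟩ : W c), (⟨eA x.h, x.h⟩ : W c)) = s(x, x * sg c)
      rw [mul_sg, Sym2.eq_iff]
      refine Or.inr ⟨?_, (show x = (⟨eA x.h, x.h⟩ : W c) from W.ext hxa rfl).symm⟩
      exact W.ext (show (0 : Amb c) = x.a + eA x.h from hy0.symm) rfl

lemma del_reach_pred (hrc : r < c) {x y : W c}
    (hxy : ((cayleyGraph (SS c r)).deleteEdges (F0 c)).Reachable x y) : (x.a = 0 ↔ y.a = 0) := by
  obtain ⟨w⟩ := hxy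
  induction w with
  | nil => rfl
  | cons hadj _ ih => exact (del_adj_pred hrc hadj).trans ih

lemma F0_disconnects (hrc : r < c) :
    ¬((cayleyGraph (SS c r)).deleteEdges (F0 c)).Connected := by
  intro hcon
  have := del_reach_pred hrc (hcon.preconnected (1 : W c) (sg c))
  exact eA_ne_zero 0 (this.mp rfl)

lemma F0_no_isolated (hr : 1 ≤ r) (hrc : r < c) (v : W c) :
    ∃ w : W c, ((cayleyGraph (SS c r)).deleteEdges (F0 c)).Adj v w := by
  refine ⟨v * ⟨0, (1 : ZMod c)⟩, ?_⟩
  rw [SimpleGraph.deleteEdges_adj]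
  refine ⟨adj_mul hrc _ (t_mem_Sf (one_cast_mem_Tf hr)), ?_⟩
  rintro ⟨h', -, he⟩
  rw [mul_t] at he
  rw [Sym2.eq_iff] at he
  rcases he with ⟨h1, h2⟩ | ⟨h1, h2⟩
  · have e1 := congrArg W.a h1
    have e2 := congrArg W.a h2
    simp only at e1 e2
    exact eA_ne_zero h' (by rw [e2, ← e1])
  · have e1 := congrArg W.a h1
    have e2 := congrArg W.a h2
    simp only at e1 e2
    exact eA_ne_zero h' (by rw [e2, ← e1])

lemma F0_isRestrictedEdgeCut (hr : 1 ≤ r) (hrc : r < c) :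
    IsRestrictedEdgeCut (cayleyGraph (SS c r)) (F0 c) :=
  ⟨F0_subset hrc, F0_disconnects hrc, F0_no_isolated hr hrc⟩

end Upper

/-! ### Hypercube edge-isoperimetry -/

section Hyper
variable [NeZero c]

lemma sum_eA_apply (K : Finset (ZMod c)) (i : ZMod c) :
    (∑ j ∈ K, eA j) i = if i ∈ K then 1 else 0 := by
  simp [eA, Finset.sum_apply]

lemma sum_eA_inj {K K' : Finset (ZMod c)} (h : ∑ j ∈ K, eA j = ∑ j ∈ K', eA j) : K = K' := by
  ext i
  have := congrFun h i
  rw [sum_eA_apply, sum_eA_apply] at this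
  by_cases hiK : i ∈ K <;> by_cases hiK' : i ∈ K' <;> simp [hiK, hiK'] at this ⊢

/-- a set closed under flips along `J` is closed under adding sums over subsets of `J`. -/
lemma closed_sum {P : Finset (Amb c)} {J : Finset (ZMod c)}
    (hP : ∀ j ∈ J, ∀ b ∈ P, b + eA j ∈ P) {K : Finset (ZMod c)} (hK : K ⊆ J) :
    ∀ b ∈ P, b + ∑ j ∈ K, eA j ∈ P := by
  induction K using Finset.induction_on with
  | empty => intro b hb; simpa using hb
  | @insert j K hjK ih =>
    intro b hb
    rw [Finset.sum_insert hjK]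
    have h1 : b + ∑ i ∈ K, eA i ∈ P := ih (fun i hi => hK (Finset.mem_insert_of_mem hi)) b hb
    have h2 := hP j (hK (Finset.mem_insert_self j K)) _ h1
    have : b + ∑ i ∈ K, eA i + eA j = b + (eA j + ∑ i ∈ K, eA i) := by ring
    rwa [this] at h2

lemma amb_eq_add_sum (b x : Amb c) :
    x = b + ∑ j ∈ Finset.univ.filter (fun i => x i ≠ b i), eA j := by
  funext i
  rw [Pi.add_apply, sum_eA_apply]
  by_cases hi : x i ≠ b i
  · rw [if_pos (Finset.mem_filter.mpr ⟨Finset.mem_univ i, hi⟩)]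
    have : ∀ u v : ZMod 2, u ≠ v → u = v + 1 := by decide
    exact this _ _ hi
  · have hmem : i ∉ Finset.univ.filter (fun i => x i ≠ b i) := by
      intro hmem
      exact hi (Finset.mem_filter.mp hmem).2
    rw [if_neg hmem]
    push_neg at hi
    rw [hi, add_zero]

def cutRow (B : Finset (Amb c)) (j : ZMod c) : Finset (Amb c) :=
  B.filter fun b => b + eA j ∉ B

lemma hypercube_cut {B : Finset (Amb c)} (hB : B.Nonempty) (hB' : B ≠ Finset.univ) :
    c ≤ ∑ j : ZMod c, (cutRow B j).card := by
  classical
  set J : Finset (ZMod c) := Finset.univ.filter (fun j => ∀ b ∈ B, b + eA j ∈ B) with hJ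
  have hPJ : ∀ j ∈ J, ∀ b ∈ B, b + eA j ∈ B := by
    intro j hj
    rw [hJ, Finset.mem_filter] at hj
    exact hj.2
  -- J is not everything
  have hJne : J ≠ Finset.univ := by
    intro hJu
    apply hB'
    obtain ⟨b0, hb0⟩ := hB
    apply Finset.eq_univ_of_forall
    intro x
    have := closed_sum hPJ (K := Finset.univ.filter (fun i => x i ≠ b0 i))
      (by rw [hJu]; exact Finset.subset_univ _) b0 hb0
    rwa [← amb_eq_add_sum b0 x] at this
  -- each non-J row is large
  have hrow : ∀ j ∈ Finset.univ \ J, 2 ^ J.card ≤ (cutRow B j).card := by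
    intro j hj
    rw [Finset.mem_sdiff, hJ, Finset.mem_filter] at hj
    have hj' : ∃ b ∈ B, b + eA j ∉ B := by
      by_contra hcon
      push_neg at hcon
      exact hj.2 ⟨Finset.mem_univ j, hcon⟩
    obtain ⟨b0, hb0, hb0'⟩ := hj'
    have hb0row : b0 ∈ cutRow B j := Finset.mem_filter.mpr ⟨hb0, hb0'⟩
    -- cutRow is closed under J-flips
    have hclosed : ∀ k ∈ J, ∀ b ∈ cutRow B j, b + eA k ∈ cutRow B j := by
      intro k hk b hb
      rw [cutRow, Finset.mem_filter] at hb ⊢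
      refine ⟨hPJ k hk b hb.1, ?_⟩
      intro hcon
      apply hb.2
      have := hPJ k hk _ hcon
      have heq : b + eA k + eA j + eA k = b + eA j := by
        have : eA k + eA k = 0 := eA_add_self k
        calc b + eA k + eA j + eA k = b + eA j + (eA k + eA k) := by ring
        _ = b + eA j := by rw [this, add_zero]
      rwa [heq] at this
    -- injection from powerset of J
    have hinj : ∀ K ∈ J.powerset, b0 + ∑ i ∈ K, eA i ∈ cutRow B j := by
      intro K hK
      exact closed_sum hclosed (Finset.mem_powerset.mp hK) b0 hb0row
    calc 2 ^ J.card = J.powerset.card := (Finset.card_powerset J).symm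
    _ ≤ (cutRow B j).card := by
        apply Finset.card_le_card_of_injOn (fun K => b0 + ∑ i ∈ K, eA i) hinj
        intro K hK K' hK' hKK
        simp only at hKK
        exact sum_eA_inj (by
          have := add_left_cancel hKK
          exact this)
  -- sum up
  have hsum : ∑ j : ZMod c, (cutRow B j).card ≥ (c - J.card) * 2 ^ J.card := by
    calc ∑ j : ZMod c, (cutRow B j).card
        ≥ ∑ j ∈ Finset.univ \ J, (cutRow B j).card := by
          apply Finset.sum_le_sum_of_subset
          exact Finset.sdiff_subset
    _ ≥ ∑ _j ∈ Finset.univ \ J, 2 ^ J.card := Finset.sum_le_sum hrow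
    _ = (c - J.card) * 2 ^ J.card := by
        rw [Finset.sum_const, Finset.card_sdiff_of_subset (Finset.subset_univ J), smul_eq_mul]
        congr 2
        simp [ZMod.card]
  have hJlt : J.card < c := by
    have h1 : J.card ≤ Fintype.card (ZMod c) := Finset.card_le_univ J
    rw [ZMod.card] at h1
    rcases lt_or_eq_of_le h1 with h | h
    · exact h
    · exfalso
      apply hJne
      apply Finset.eq_univ_of_card
      rw [h, ZMod.card]
  have harith : c ≤ (c - J.card) * 2 ^ J.card := by
    set t := J.card
    have h2t : t + 1 ≤ 2 ^ t := Nat.lt_two_pow_self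
    calc c = (c - t) + t := by omega
    _ ≤ (c - t) + (c - t) * t := by
        have : t ≤ (c - t) * t := Nat.le_mul_of_pos_left t (by omega)
        omega
    _ = (c - t) * (t + 1) := by ring
    _ ≤ (c - t) * 2 ^ t := Nat.mul_le_mul_left _ h2t
  omega

def hcut [NeZero c] (B : Finset (Amb c)) : Finset (Amb c × ZMod c) :=
  Finset.univ.filter fun p : Amb c × ZMod c => p.1 ∈ B ∧ p.1 + eA p.2 ∉ B

lemma hcut_card [NeZero c] (B : Finset (Amb c)) :
    (hcut B).card = ∑ j : ZMod c, (cutRow B j).card := by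
  classical
  rw [Finset.card_eq_sum_card_fiberwise
      (f := Prod.snd) (t := Finset.univ) (fun _ _ => Finset.mem_univ _)]
  apply Finset.sum_congr rfl
  intro j _
  apply Finset.card_bij' (i := fun p (_ : p ∈ (hcut B).filter fun p => p.2 = j) => p.1)
      (j := fun b (_ : b ∈ cutRow B j) => (b, j))
  · intro p hp
    simp only [hcut, Finset.mem_filter, Finset.mem_univ, true_and] at hp
    obtain ⟨⟨h1, h2⟩, h3⟩ := hp
    rw [cutRow, Finset.mem_filter]
    subst h3
    exact ⟨h1, h2⟩
  · intro b hb
    rw [cutRow, Finset.mem_filter] at hb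
    simp only [hcut, Finset.mem_filter, Finset.mem_univ, true_and]
    exact ⟨⟨hb.1, hb.2⟩, trivial⟩
  · intro p hp
    simp only [Finset.mem_filter] at hp
    exact Prod.ext rfl hp.2.symm
  · intro b hb
    rfl

lemma hypercube_cut' [NeZero c] {B : Finset (Amb c)} (hB : B.Nonempty)
    (hB' : B ≠ Finset.univ) : c ≤ (hcut B).card := by
  rw [hcut_card]
  exact hypercube_cut hB hB'

end Hyper

/-! ### Counting lemmas for the lower bound -/

section Count
variable [NeZero c]

/-- internal cut pairs of a height-set `Y` inside one cluster -/
def icut (c r : ℕ) (Y : Finset (ZMod c)) : Finset (ZMod c × ZMod c) :=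
  (Y ×ˢ Tf c r).filter fun q => q.1 + q.2 ∉ Y

lemma genInt (hrc : 2*r < c) (Y : Finset (ZMod c)) :
    Y.card * (2*r) ≤ (icut c r Y).card + Y.card * (Y.card - 1) := by
  classical
  have hsplit := Finset.card_filter_add_card_filter_not
      (s := Y ×ˢ Tf c r) (p := fun q => q.1 + q.2 ∉ Y)
  have hprod : (Y ×ˢ Tf c r).card = Y.card * (2*r) := by
    rw [Finset.card_product, card_Tf hrc]
  have hin : ((Y ×ˢ Tf c r).filter fun q => ¬(q.1 + q.2 ∉ Y)).card ≤ Y.card * (Y.card - 1) := by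
    have hle : ((Y ×ˢ Tf c r).filter fun q => ¬(q.1 + q.2 ∉ Y)).card ≤ Y.offDiag.card := by
      apply Finset.card_le_card_of_injOn (fun q => (q.1, q.1 + q.2))
      · intro q hq
        simp only [Finset.mem_coe, Finset.mem_filter, Finset.mem_product, not_not] at hq
        obtain ⟨⟨h1, h2⟩, h3⟩ := hq
        rw [Finset.mem_coe, Finset.mem_offDiag]
        refine ⟨h1, h3, ?_⟩
        intro hcon
        have hq2 : q.2 = 0 := by
          have := hcon.symm
          rwa [add_eq_left] at this
        exact zero_not_mem_Tf (by omega) (hq2 ▸ h2)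
      · intro q hq q' hq' he
        simp only [Prod.mk.injEq] at he
        obtain ⟨e1, e2⟩ := he
        have : q.2 = q'.2 := by
          have := e2
          rw [e1] at this
          exact add_left_cancel this
        exact Prod.ext e1 this
    rw [Finset.offDiag_card] at hle
    have heq : Y.card * Y.card - Y.card = Y.card * (Y.card - 1) := by
      rw [Nat.mul_sub_one, mul_comm]
    omega
  rw [icut]
  omega

lemma icut_compl (Y : Finset (ZMod c)) :
    (icut c r (Finset.univ \ Y)).card = (icut c r Y).card := by
  classical
  have hmem : ∀ x : ZMod c, (x ∈ Finset.univ \ Y) ↔ x ∉ Y := by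
    intro x; simp [Finset.mem_sdiff]
  apply Finset.card_bij' (i := fun q (_ : q ∈ icut c r (Finset.univ \ Y)) => (q.1 + q.2, -q.2))
      (j := fun q (_ : q ∈ icut c r Y) => (q.1 + q.2, -q.2))
  · intro q hq
    rw [icut, Finset.mem_filter, Finset.mem_product, hmem] at hq
    rw [icut, Finset.mem_filter, Finset.mem_product]
    obtain ⟨⟨h1, h2⟩, h3⟩ := hq
    have h3' : q.1 + q.2 ∈ Y := by
      by_contra hcon
      exact h3 ((hmem _).mpr hcon)
    refine ⟨⟨h3', neg_mem_Tf h2⟩, ?_⟩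
    rw [add_neg_cancel_right]
    exact h1
  · intro q hq
    rw [icut, Finset.mem_filter, Finset.mem_product] at hq
    rw [icut, Finset.mem_filter, Finset.mem_product, hmem]
    obtain ⟨⟨h1, h2⟩, h3⟩ := hq
    refine ⟨⟨h3, neg_mem_Tf h2⟩, ?_⟩
    rw [add_neg_cancel_right, hmem, not_not]
    exact h1
  · intro q hq
    exact Prod.ext (add_neg_cancel_right _ _) (neg_neg _)
  · intro q hq
    exact Prod.ext (add_neg_cancel_right _ _) (neg_neg _)

lemma icut_lower_int (hrc : 2*r < c) {Y : Finset (ZMod c)} (h1 : 0 < Y.card) (h2 : Y.card < c) :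
    ((Y.card : ℤ) * (2*r - Y.card + 1) ≤ ((icut c r Y).card : ℤ)) ∧
    (((c : ℤ) - Y.card) * (2*r - (c - Y.card) + 1) ≤ ((icut c r Y).card : ℤ)) := by
  have hA := genInt hrc Y
  have hB := genInt hrc (Finset.univ \ Y)
  rw [icut_compl] at hB
  have hcardc : (Finset.univ \ Y).card = c - Y.card := by
    rw [Finset.card_sdiff_of_subset (Finset.subset_univ Y), Finset.card_univ, ZMod.card]
  rw [hcardc] at hB
  have h1' : 1 ≤ Y.card := h1
  have h2' : Y.card ≤ c := le_of_lt h2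
  have h1'' : 1 ≤ c - Y.card := by omega
  zify [h1', h1'', h2'] at hA hB
  constructor
  · nlinarith [hA]
  · nlinarith [hB]

lemma icut_split_lower (hrc : 2*r < c) (hc2 : c ≤ 4*r - 1) (hr : 1 ≤ r)
    {Y : Finset (ZMod c)} (h1 : 0 < Y.card) (h2 : Y.card < c) :
    2*r ≤ (icut c r Y).card := by
  obtain ⟨hA, hB⟩ := icut_lower_int hrc h1 h2
  have h1' : (1 : ℤ) ≤ Y.card := by exact_mod_cast h1
  have h2' : (Y.card : ℤ) ≤ c - 1 := by
    have h := h2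
    zify at h
    linarith
  have hc2' : (c : ℤ) ≤ 4*r - 1 := by
    zify [show 1 ≤ 4*r by omega] at hc2
    exact hc2
  have hr' : (1 : ℤ) ≤ r := by exact_mod_cast hr
  zify
  by_cases hcase : (Y.card : ℤ) ≤ 2*r
  · nlinarith [hA, mul_nonneg (by linarith : (0:ℤ) ≤ (Y.card : ℤ) - 1)
      (by linarith : (0:ℤ) ≤ 2*(r:ℤ) - (Y.card : ℤ))]
  · push_neg at hcase
    have hb1 : (1 : ℤ) ≤ (c : ℤ) - Y.card := by
      zify at h2
      omega
    have hb2 : (c : ℤ) - Y.card ≤ 2*r - 2 := by omega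
    nlinarith [hB, mul_nonneg (by linarith : (0:ℤ) ≤ ((c:ℤ) - Y.card) - 1)
      (by linarith : (0:ℤ) ≤ 2*(r:ℤ) - ((c:ℤ) - Y.card))]

lemma icut_ge_min (hrc : 2*r < c) (hc2 : c ≤ 4*r - 1) (hr : 1 ≤ r)
    {Y : Finset (ZMod c)} (h1 : 0 < Y.card) (h2 : Y.card < c) :
    min Y.card (c - Y.card) ≤ (icut c r Y).card := by
  obtain ⟨hA, hB⟩ := icut_lower_int hrc h1 h2
  have h1' : (1 : ℤ) ≤ Y.card := by exact_mod_cast h1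
  have h2' : (Y.card : ℤ) ≤ c - 1 := by
    have h := h2; zify at h; linarith
  have hc2' : (c : ℤ) ≤ 4*r - 1 := by
    zify [show 1 ≤ 4*r by omega] at hc2
    exact hc2
  have hr' : (1 : ℤ) ≤ r := by exact_mod_cast hr
  rcases le_or_gt (2 * Y.card) c with hcase | hcase
  · have hmin : min Y.card (c - Y.card) ≤ Y.card := min_le_left _ _
    have hYN : Y.card ≤ (icut c r Y).card := by
      have hcase' : 2 * (Y.card : ℤ) ≤ c := by exact_mod_cast hcase
      have haux : (Y.card : ℤ) ≤ 2*r := by omega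
      zify
      nlinarith [hA, mul_nonneg (by linarith : (0:ℤ) ≤ (Y.card:ℤ))
        (by linarith : (0:ℤ) ≤ 2*(r:ℤ) - Y.card)]
    omega
  · have hmin : min Y.card (c - Y.card) ≤ c - Y.card := min_le_right _ _
    have hYN : c - Y.card ≤ (icut c r Y).card := by
      have hcase' : (c : ℤ) < 2 * Y.card := by exact_mod_cast hcase
      have haux : (c : ℤ) - Y.card ≤ 2*r := by omega
      zify [le_of_lt h2]
      nlinarith [hB, mul_nonneg (by linarith : (0:ℤ) ≤ (c:ℤ) - Y.card)
        (by linarith : (0:ℤ) ≤ 2*(r:ℤ) - ((c:ℤ) - Y.card))]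
    omega

lemma icut_pendant (hrc : 2*r < c) (hc2 : c ≤ 4*r - 1) (hr : 1 ≤ r)
    {Y : Finset (ZMod c)} (h1 : 2 ≤ Y.card) (h2 : Y.card < c) :
    c ≤ (icut c r Y).card + Y.card := by
  obtain ⟨hA, hB⟩ := icut_lower_int hrc (by omega) h2
  have h1' : (2 : ℤ) ≤ Y.card := by exact_mod_cast h1
  have h2' : (Y.card : ℤ) ≤ c - 1 := by
    have h := h2; zify at h; linarith
  have hc2' : (c : ℤ) ≤ 4*r - 1 := by
    zify [show 1 ≤ 4*r by omega] at hc2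
    exact hc2
  have hr' : (1 : ℤ) ≤ r := by exact_mod_cast hr
  zify
  rcases le_or_gt (2 * (Y.card : ℤ)) c with hcase | hcase
  · nlinarith [hA, mul_nonneg (by linarith : (0:ℤ) ≤ (Y.card:ℤ) - 2)
      (by linarith : (0:ℤ) ≤ (c:ℤ) - 2*Y.card),
      mul_nonneg (by linarith : (0:ℤ) ≤ (Y.card:ℤ))
      (by linarith : (0:ℤ) ≤ 4*(r:ℤ) - 1 - c)]
  · have haux : (c : ℤ) - Y.card ≤ 2*r := by omega
    have haux2 : (1:ℤ) ≤ (c:ℤ) - Y.card := by omega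
    nlinarith [hB, mul_nonneg (by linarith : (0:ℤ) ≤ (c:ℤ) - Y.card)
      (by linarith : (0:ℤ) ≤ 2*(r:ℤ) - ((c:ℤ) - Y.card))]

end Count
/-! ### The lower bound -/

section Lower
variable [NeZero c]

lemma lower_bound (hr : 1 ≤ r) (hc1 : 2*r + 2 ≤ c) (hc2 : c ≤ 4*r - 1)
    {F : Set (Sym2 (W c))} (hF : IsRestrictedEdgeCut (cayleyGraph (SS c r)) F) :
    c ≤ F.ncard := by
  classical
  obtain ⟨hFsub, hFdis, hFiso⟩ := hF
  have hrc : 2*r < c := by omega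
  have hrc1 : r < c := by omega
  set G := cayleyGraph (SS c r) with hG
  set GF := G.deleteEdges F with hGF
  -- extract the reachable class X
  have hnpre : ¬ GF.Preconnected := by
    intro hp
    exact hFdis ((SimpleGraph.connected_iff _).mpr ⟨hp, ⟨1⟩⟩)
  rw [SimpleGraph.Preconnected] at hnpre
  push_neg at hnpre
  obtain ⟨u0, v0, hnr⟩ := hnpre
  set X : Set (W c) := {v | GF.Reachable u0 v} with hX
  have hu0 : u0 ∈ X := SimpleGraph.Reachable.refl u0
  have hv0 : v0 ∉ X := hnr
  have hXadj : ∀ {v w : W c}, v ∈ X → GF.Adj v w → w ∈ X :=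
    fun hv ha => SimpleGraph.Reachable.trans hv ha.reachable
  -- crossing edges lie in F
  have hcrossF : ∀ v ∈ X, ∀ t ∈ Sf c r, v * t ∉ X → s(v, v * t) ∈ F := by
    intro v hv t ht hvt
    by_contra hnot
    apply hvt
    apply hXadj hv
    rw [hGF, SimpleGraph.deleteEdges_adj]
    exact ⟨adj_mul hrc1 v ht, hnot⟩
  -- neighbours within X / within Xᶜ
  have hXnb : ∀ v ∈ X, ∃ t ∈ Sf c r, v * t ∈ X := by
    intro v hv
    obtain ⟨w, hw⟩ := hFiso v
    have hw' := hw
    rw [hGF, SimpleGraph.deleteEdges_adj] at hw'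
    have hadj : G.Adj v w := hw'.1
    rw [hG, adj_iff hrc1] at hadj
    refine ⟨v⁻¹ * w, hadj, ?_⟩
    rw [mul_inv_cancel_left]
    exact hXadj hv hw
  have hXnb' : ∀ v ∉ X, ∃ t ∈ Sf c r, v * t ∉ X := by
    intro v hv
    obtain ⟨w, hw⟩ := hFiso v
    have hw' := hw
    rw [hGF, SimpleGraph.deleteEdges_adj] at hw'
    have hadj : G.Adj v w := hw'.1
    rw [hG, adj_iff hrc1] at hadj
    refine ⟨v⁻¹ * w, hadj, ?_⟩
    rw [mul_inv_cancel_left]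
    intro hwX
    exact hv (hXadj hwX hw.symm)
  -- the master finset
  set M : Finset (W c × W c) :=
    (Finset.univ ×ˢ Sf c r).filter (fun p => p.1 ∈ X ∧ p.1 * p.2 ∉ X) with hM
  have hMmem : ∀ p : W c × W c, p ∈ M ↔ p.2 ∈ Sf c r ∧ p.1 ∈ X ∧ p.1 * p.2 ∉ X := by
    intro p
    rw [hM, Finset.mem_filter, Finset.mem_product]
    constructor
    · rintro ⟨⟨-, h2⟩, h3, h4⟩; exact ⟨h2, h3, h4⟩
    · rintro ⟨h2, h3, h4⟩; exact ⟨⟨Finset.mem_univ _, h2⟩, h3, h4⟩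
  -- reduce to counting M
  suffices hMcard : c ≤ M.card by
    have hinj : Set.InjOn (fun p : W c × W c => s(p.1, p.1 * p.2)) ↑M := by
      intro p hp q hq he
      rw [Finset.mem_coe, hMmem] at hp hq
      simp only [Sym2.eq_iff] at he
      rcases he with ⟨e1, e2⟩ | ⟨e1, e2⟩
      · refine Prod.ext e1 ?_
        rw [e1] at e2
        exact mul_left_cancel e2
      · exfalso
        exact hp.2.2 (e2.symm ▸ hq.2.1)
    have himg : ↑(M.image (fun p : W c × W c => s(p.1, p.1 * p.2))) ⊆ F := by
      intro e he
      simp only [Finset.coe_image, Set.mem_image, Finset.mem_coe] at he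
      obtain ⟨p, hp, rfl⟩ := he
      rw [hMmem] at hp
      exact hcrossF p.1 hp.2.1 p.2 hp.1 hp.2.2
    calc c ≤ M.card := hMcard
    _ = (M.image (fun p : W c × W c => s(p.1, p.1 * p.2))).card :=
        (Finset.card_image_of_injOn hinj).symm
    _ = (↑(M.image (fun p : W c × W c => s(p.1, p.1 * p.2))) : Set (Sym2 (W c))).ncard :=
        (Set.ncard_coe_finset _).symm
    _ ≤ F.ncard := Set.ncard_le_ncard himg (Set.toFinite F)
  -- cluster machinery
  set Xh : Amb c → Finset (ZMod c) :=
    fun w => Finset.univ.filter (fun h => (⟨w, h⟩ : W c) ∈ X) with hXh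
  have hXh_mem : ∀ (w : Amb c) (h : ZMod c), h ∈ Xh w ↔ (⟨w, h⟩ : W c) ∈ X := by
    intro w h
    rw [hXh]
    simp only [Finset.mem_filter, Finset.mem_univ, true_and]
  have hcardle : ∀ w, (Xh w).card ≤ c := by
    intro w
    calc (Xh w).card ≤ (Finset.univ : Finset (ZMod c)).card := Finset.card_le_univ _
    _ = c := by rw [Finset.card_univ, ZMod.card]
  have hfull : ∀ w, (Xh w).card = c → ∀ h, (⟨w, h⟩ : W c) ∈ X := by
    intro w hw h
    have he : Xh w = Finset.univ := Finset.eq_univ_of_card _ (by rw [hw, ZMod.card])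
    rw [← hXh_mem, he]
    exact Finset.mem_univ h
  have hempty : ∀ w, (Xh w).card = 0 → ∀ h, (⟨w, h⟩ : W c) ∉ X := by
    intro w hw h
    rw [← hXh_mem, Finset.card_eq_zero.mp hw]
    exact Finset.notMem_empty h
  -- the cross finset and embeddings
  set Mcross : Finset (Amb c × ZMod c) :=
    Finset.univ.filter (fun q : Amb c × ZMod c =>
      (⟨q.1, q.2⟩ : W c) ∈ X ∧ (⟨q.1 + eA q.2, q.2⟩ : W c) ∉ X) with hMcr
  have hMcr_mem : ∀ q : Amb c × ZMod c, q ∈ Mcross ↔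
      ((⟨q.1, q.2⟩ : W c) ∈ X ∧ (⟨q.1 + eA q.2, q.2⟩ : W c) ∉ X) := by
    intro q; rw [hMcr]; simp only [Finset.mem_filter, Finset.mem_univ, true_and]
  set κ : Amb c × ZMod c → W c × W c := fun q => ((⟨q.1, q.2⟩ : W c), sg c) with hκ
  have hκM : ∀ q ∈ Mcross, κ q ∈ M := by
    intro q hq
    rw [hMcr_mem] at hq
    rw [hκ, hMmem]
    refine ⟨sg_mem_Sf, hq.1, ?_⟩
    rw [mul_sg]
    exact hq.2
  set ι : Amb c → (ZMod c × ZMod c) → (W c × W c) :=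
    fun w q => ((⟨w, q.1⟩ : W c), (⟨0, q.2⟩ : W c)) with hι
  have hιM : ∀ (w : Amb c), ∀ q ∈ icut c r (Xh w), ι w q ∈ M := by
    intro w q hq
    rw [icut, Finset.mem_filter, Finset.mem_product] at hq
    obtain ⟨⟨h1, h2⟩, h3⟩ := hq
    rw [hι, hMmem]
    refine ⟨t_mem_Sf h2, (hXh_mem _ _).mp h1, ?_⟩
    rw [mul_t]
    intro hcon
    exact h3 ((hXh_mem _ _).mpr hcon)
  have hι_inj : ∀ w : Amb c, Set.InjOn (ι w) ↑(icut c r (Xh w)) := by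
    intro w p _ p' _ he
    rw [hι] at he
    simp only [Prod.mk.injEq] at he
    exact Prod.ext (congrArg W.h he.1) (congrArg W.h he.2)
  have hκ_inj : Set.InjOn κ ↑Mcross := by
    intro p _ p' _ he
    rw [hκ] at he
    simp only [Prod.mk.injEq] at he
    exact Prod.ext (congrArg W.a he.1) (congrArg W.h he.1)
  -- counting glue: one internal family and the cross family
  have hglue : ∀ w : Amb c, (icut c r (Xh w)).card + Mcross.card ≤ M.card := by
    intro w
    have h1 : ((icut c r (Xh w)).image (ι w)).card = (icut c r (Xh w)).card :=
      Finset.card_image_of_injOn (hι_inj w)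
    have h2 : (Mcross.image κ).card = Mcross.card := Finset.card_image_of_injOn hκ_inj
    have hdisj : Disjoint ((icut c r (Xh w)).image (ι w)) (Mcross.image κ) := by
      rw [Finset.disjoint_left]
      rintro p hp hq
      simp only [Finset.mem_image] at hp hq
      obtain ⟨a1, -, he1⟩ := hp
      obtain ⟨a2, -, he2⟩ := hq
      rw [hι] at he1
      rw [hκ] at he2
      have := congrArg (fun z : W c × W c => z.2.a) (he1.trans he2.symm)
      simp only [sg] at this
      exact eA_ne_zero 0 this.symm
    have hsub : ((icut c r (Xh w)).image (ι w)) ∪ (Mcross.image κ) ⊆ M := by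
      intro p hp
      rcases Finset.mem_union.mp hp with hp | hp
      · obtain ⟨a1, ha1, rfl⟩ := Finset.mem_image.mp hp
        exact hιM w a1 ha1
      · obtain ⟨a2, ha2, rfl⟩ := Finset.mem_image.mp hp
        exact hκM a2 ha2
    calc (icut c r (Xh w)).card + Mcross.card
        = (((icut c r (Xh w)).image (ι w)) ∪ (Mcross.image κ)).card := by
          rw [Finset.card_union_of_disjoint hdisj, h1, h2]
    _ ≤ M.card := Finset.card_le_card hsub
  have hglue2 : ∀ w1 w2 : Amb c, w1 ≠ w2 →
      (icut c r (Xh w1)).card + (icut c r (Xh w2)).card ≤ M.card := by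
    intro w1 w2 hne
    have h1 : ((icut c r (Xh w1)).image (ι w1)).card = (icut c r (Xh w1)).card :=
      Finset.card_image_of_injOn (hι_inj w1)
    have h2 : ((icut c r (Xh w2)).image (ι w2)).card = (icut c r (Xh w2)).card :=
      Finset.card_image_of_injOn (hι_inj w2)
    have hdisj : Disjoint ((icut c r (Xh w1)).image (ι w1))
        ((icut c r (Xh w2)).image (ι w2)) := by
      rw [Finset.disjoint_left]
      rintro p hp hq
      simp only [Finset.mem_image] at hp hq
      obtain ⟨a1, -, he1⟩ := hp
      obtain ⟨a2, -, he2⟩ := hq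
      rw [hι] at he1 he2
      have := congrArg (fun z : W c × W c => z.1.a) (he1.trans he2.symm)
      simp only at this
      exact hne this
    have hsub : ((icut c r (Xh w1)).image (ι w1)) ∪ ((icut c r (Xh w2)).image (ι w2)) ⊆ M := by
      intro p hp
      rcases Finset.mem_union.mp hp with hp | hp
      · obtain ⟨a1, ha1, rfl⟩ := Finset.mem_image.mp hp
        exact hιM w1 a1 ha1
      · obtain ⟨a2, ha2, rfl⟩ := Finset.mem_image.mp hp
        exact hιM w2 a2 ha2
    calc (icut c r (Xh w1)).card + (icut c r (Xh w2)).card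
        = (((icut c r (Xh w1)).image (ι w1)) ∪ ((icut c r (Xh w2)).image (ι w2))).card := by
          rw [Finset.card_union_of_disjoint hdisj, h1, h2]
    _ ≤ M.card := Finset.card_le_card hsub
  -- split clusters
  set Qs : Finset (Amb c) := Finset.univ.filter (fun w => 0 < (Xh w).card ∧ (Xh w).card < c)
    with hQs
  have hQs_mem : ∀ w : Amb c, w ∈ Qs ↔ (0 < (Xh w).card ∧ (Xh w).card < c) := by
    intro w; rw [hQs]; simp only [Finset.mem_filter, Finset.mem_univ, true_and]
  by_cases h2Q : 2 ≤ Qs.card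
  · -- Case A : at least two split clusters
    obtain ⟨q1, hq1, q2, hq2, hne⟩ := Finset.one_lt_card.mp h2Q
    rw [hQs_mem] at hq1 hq2
    have hic1 := icut_split_lower hrc hc2 hr hq1.1 hq1.2
    have hic2 := icut_split_lower hrc hc2 hr hq2.1 hq2.2
    have := hglue2 q1 q2 hne
    omega
  by_cases h1Q : Qs.card = 1
  · -- Case C : exactly one split cluster
    obtain ⟨q, hq⟩ := Finset.card_eq_one.mp h1Q
    have hqQ : q ∈ Qs := by rw [hq]; exact Finset.mem_singleton_self q
    rw [hQs_mem] at hqQ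
    obtain ⟨hq0, hqc⟩ := hqQ
    have hdich : ∀ w : Amb c, w ≠ q → (Xh w).card = 0 ∨ (Xh w).card = c := by
      intro w hwq
      by_contra hcon
      push_neg at hcon
      have hw : w ∈ Qs := (hQs_mem w).mpr ⟨by omega, lt_of_le_of_ne (hcardle w) hcon.2⟩
      rw [hq, Finset.mem_singleton] at hw
      exact hwq hw
    set Pf : Finset (Amb c) := Finset.univ.filter (fun w => w ≠ q ∧ (Xh w).card = c) with hPf
    set Zf : Finset (Amb c) := Finset.univ.filter (fun w => w ≠ q ∧ (Xh w).card = 0) with hZf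
    have hPf_mem : ∀ w : Amb c, w ∈ Pf ↔ (w ≠ q ∧ (Xh w).card = c) := by
      intro w; rw [hPf]; simp only [Finset.mem_filter, Finset.mem_univ, true_and]
    have hZf_mem : ∀ w : Amb c, w ∈ Zf ↔ (w ≠ q ∧ (Xh w).card = 0) := by
      intro w; rw [hZf]; simp only [Finset.mem_filter, Finset.mem_univ, true_and]
    by_cases hPe : Pf = ∅
    · -- C1 : X is contained in cluster q
      have hXq : ∀ v : W c, v ∈ X → v.a = q := by
        intro v hv
        by_contra hvq
        rcases hdich v.a hvq with h0 | hcc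
        · exact (hempty v.a h0 v.h) hv
        · have : v.a ∈ Pf := (hPf_mem v.a).mpr ⟨hvq, hcc⟩
          rw [hPe] at this
          exact Finset.notMem_empty _ this
      have hu0q : u0.a = q := hXq u0 hu0
      have ha2 : 2 ≤ (Xh q).card := by
        obtain ⟨t, ht, htX⟩ := hXnb u0 hu0
        rcases mem_Sf_elim ht with ⟨hta, htt⟩ | rfl
        · obtain ⟨ta, th⟩ := t
          simp only at hta htt
          subst hta
          rw [mul_t] at htX
          have e1 : u0.h ∈ Xh q := by
            rw [hXh_mem, ← hu0q]
            exact hu0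
          have e2 : u0.h + th ∈ Xh q := by
            rw [hXh_mem, ← hu0q]
            exact htX
          have hne' : u0.h ≠ u0.h + th := by
            intro hcon
            exact zero_not_mem_Tf hrc1 ((add_eq_left.mp hcon.symm) ▸ htt)
          have := Finset.one_lt_card.mpr ⟨u0.h, e1, u0.h + th, e2, hne'⟩
          omega
        · exfalso
          rw [mul_sg] at htX
          have hq' := hXq _ htX
          simp only at hq'
          rw [hu0q] at hq'
          exact eA_ne_zero u0.h (add_eq_left.mp hq')
      set Ca : Finset (Amb c × ZMod c) :=
        Finset.univ.filter (fun p : Amb c × ZMod c => p.1 = q ∧ p.2 ∈ Xh q) with hCa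
      have hCaM : Ca ⊆ Mcross := by
        intro p hp
        rw [hCa, Finset.mem_filter] at hp
        obtain ⟨-, hp1, hp2⟩ := hp
        rw [hMcr_mem]
        constructor
        · rw [hp1]
          exact (hXh_mem q p.2).mp hp2
        · intro hcon
          have hqq := hXq _ hcon
          simp only at hqq
          rw [hp1] at hqq
          exact eA_ne_zero p.2 (add_eq_left.mp hqq)
      have hCacard : Ca.card = (Xh q).card := by
        apply Finset.card_bij' (i := fun p (_ : p ∈ Ca) => p.2)
          (j := fun h (_ : h ∈ Xh q) => (q, h))
        · intro p hp
          rw [hCa, Finset.mem_filter] at hp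
          exact hp.2.2
        · intro h hh
          rw [hCa, Finset.mem_filter]
          exact ⟨Finset.mem_univ _, rfl, hh⟩
        · intro p hp
          rw [hCa, Finset.mem_filter] at hp
          exact Prod.ext hp.2.1.symm rfl
        · intro h hh
          rfl
      have hpend := icut_pendant hrc hc2 hr ha2 hqc
      have hg := hglue q
      have hCale : Ca.card ≤ Mcross.card := Finset.card_le_card hCaM
      omega
    by_cases hZe : Zf = ∅
    · -- C2 : the complement of X is contained in cluster q
      have hXq : ∀ v : W c, v ∉ X → v.a = q := by
        intro v hv
        by_contra hvq
        rcases hdich v.a hvq with h0 | hcc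
        · have : v.a ∈ Zf := (hZf_mem v.a).mpr ⟨hvq, h0⟩
          rw [hZe] at this
          exact Finset.notMem_empty _ this
        · exact hv (hfull v.a hcc v.h)
      have hv0q : v0.a = q := hXq v0 hv0
      have hcompl_card : (Finset.univ \ Xh q).card = c - (Xh q).card := by
        rw [Finset.card_sdiff_of_subset (Finset.subset_univ _), Finset.card_univ, ZMod.card]
      have hb2 : 2 ≤ c - (Xh q).card := by
        obtain ⟨t, ht, htX⟩ := hXnb' v0 hv0
        rcases mem_Sf_elim ht with ⟨hta, htt⟩ | rfl
        · obtain ⟨ta, th⟩ := t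
          simp only at hta htt
          subst hta
          rw [mul_t] at htX
          have e1 : v0.h ∈ Finset.univ \ Xh q := by
            rw [Finset.mem_sdiff]
            refine ⟨Finset.mem_univ _, ?_⟩
            rw [hXh_mem, ← hv0q]
            exact hv0
          have e2 : v0.h + th ∈ Finset.univ \ Xh q := by
            rw [Finset.mem_sdiff]
            refine ⟨Finset.mem_univ _, ?_⟩
            rw [hXh_mem, ← hv0q]
            exact htX
          have hne' : v0.h ≠ v0.h + th := by
            intro hcon
            exact zero_not_mem_Tf hrc1 ((add_eq_left.mp hcon.symm) ▸ htt)
          have := Finset.one_lt_card.mpr ⟨v0.h, e1, v0.h + th, e2, hne'⟩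
          omega
        · exfalso
          rw [mul_sg] at htX
          have hq' := hXq _ htX
          simp only at hq'
          rw [hv0q] at hq'
          exact eA_ne_zero v0.h (add_eq_left.mp hq')
      set Cb : Finset (Amb c × ZMod c) :=
        Finset.univ.filter (fun p : Amb c × ZMod c => p.1 = q + eA p.2 ∧ p.2 ∉ Xh q) with hCb
      have hCbM : Cb ⊆ Mcross := by
        intro p hp
        rw [hCb, Finset.mem_filter] at hp
        obtain ⟨-, hp1, hp2⟩ := hp
        rw [hMcr_mem]
        constructor
        · by_contra hcon
          have hqq := hXq _ hcon
          simp only at hqq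
          rw [hp1] at hqq
          exact eA_ne_zero p.2 (add_eq_left.mp hqq)
        · have heq : p.1 + eA p.2 = q := by
            rw [hp1, add_assoc, eA_add_self, add_zero]
          rw [heq]
          intro hcon
          exact hp2 ((hXh_mem q p.2).mpr hcon)
      have hCbcard : Cb.card = c - (Xh q).card := by
        rw [← hcompl_card]
        apply Finset.card_bij' (i := fun p (_ : p ∈ Cb) => p.2)
          (j := fun h (_ : h ∈ Finset.univ \ Xh q) => (q + eA h, h))
        · intro p hp
          rw [hCb, Finset.mem_filter] at hp
          rw [Finset.mem_sdiff]
          exact ⟨Finset.mem_univ _, hp.2.2⟩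
        · intro h hh
          rw [Finset.mem_sdiff] at hh
          rw [hCb, Finset.mem_filter]
          exact ⟨Finset.mem_univ _, rfl, hh.2⟩
        · intro p hp
          rw [hCb, Finset.mem_filter] at hp
          exact Prod.ext hp.2.1.symm rfl
        · intro h hh
          rfl
      have hpend := icut_pendant hrc hc2 hr
        (Y := Finset.univ \ Xh q) (by omega) (by omega)
      rw [icut_compl, hcompl_card] at hpend
      have hg := hglue q
      have hCble : Cb.card ≤ Mcross.card := Finset.card_le_card hCbM
      omega
    · -- C3 : both a full and an empty cluster exist besides q
      obtain ⟨p0, hp0⟩ := Finset.nonempty_iff_ne_empty.mpr hPe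
      obtain ⟨z0, hz0⟩ := Finset.nonempty_iff_ne_empty.mpr hZe
      rw [hPf_mem] at hp0
      rw [hZf_mem] at hz0
      have hNmin := icut_ge_min hrc hc2 hr hq0 hqc
      rcases le_or_gt (2 * (Xh q).card) c with hlh | hlh
      · -- low case : B = insert q Zf, use the flipped pairs
        set B : Finset (Amb c) := insert q Zf with hB
        have hBne : B.Nonempty := ⟨q, Finset.mem_insert_self _ _⟩
        have hBnu : B ≠ Finset.univ := by
          intro hBu
          have : p0 ∈ B := by rw [hBu]; exact Finset.mem_univ _
          rcases Finset.mem_insert.mp this with hcon | hcon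
          · exact hp0.1 hcon
          · rw [hZf_mem] at hcon
            omega
        have hhc := hypercube_cut' hBne hBnu
        set Dgood : Finset (Amb c × ZMod c) :=
          (hcut B).filter (fun p => ¬(p.1 = q ∧ p.2 ∈ Xh q)) with hD
        have hDcard : (hcut B).card ≤ Dgood.card + (Xh q).card := by
          have hsplit := Finset.card_filter_add_card_filter_not
            (s := hcut B) (p := fun p : Amb c × ZMod c => ¬(p.1 = q ∧ p.2 ∈ Xh q))
          have hbad : ((hcut B).filter
              (fun p : Amb c × ZMod c => ¬¬(p.1 = q ∧ p.2 ∈ Xh q))).card ≤ (Xh q).card := by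
            apply Finset.card_le_card_of_injOn (fun p => p.2)
            · intro p hp
              rw [Finset.mem_coe, Finset.mem_filter] at hp
              exact (not_not.mp hp.2).2
            · intro p hp p' hp' he
              rw [Finset.mem_coe, Finset.mem_filter] at hp hp'
              exact Prod.ext ((not_not.mp hp.2).1.trans (not_not.mp hp'.2).1.symm) he
          rw [hD]
          omega
        have hΦ : ∀ p ∈ Dgood, (p.1 + eA p.2, p.2) ∈ Mcross := by
          intro p hp
          rw [hD, Finset.mem_filter] at hp
          obtain ⟨hpB, hgood⟩ := hp
          rw [hcut, Finset.mem_filter] at hpB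
          obtain ⟨-, hp1, hp2⟩ := hpB
          rw [hMcr_mem]
          constructor
          · have hnq : p.1 + eA p.2 ≠ q := by
              intro hcon
              exact hp2 (hcon ▸ Finset.mem_insert_self q Zf)
            have hnZ : p.1 + eA p.2 ∉ Zf := fun hcon => hp2 (Finset.mem_insert_of_mem hcon)
            rcases hdich _ hnq with h0 | hcc
            · exact absurd ((hZf_mem _).mpr ⟨hnq, h0⟩) hnZ
            · exact hfull _ hcc p.2
          · have heq : p.1 + eA p.2 + eA p.2 = p.1 := by
              rw [add_assoc, eA_add_self, add_zero]
            rw [heq]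
            rcases Finset.mem_insert.mp hp1 with heq' | hZ
            · intro hcon
              exact hgood ⟨heq', (hXh_mem q p.2).mpr (heq' ▸ hcon)⟩
            · rw [hZf_mem] at hZ
              exact hempty _ hZ.2 p.2
        have hΦcard : Dgood.card ≤ Mcross.card := by
          apply Finset.card_le_card_of_injOn (fun p : Amb c × ZMod c => (p.1 + eA p.2, p.2)) (fun p hp => hΦ p hp)
          intro p hp p' hp' he
          simp only [Prod.mk.injEq] at he
          have h2 : p.2 = p'.2 := he.2
          have h1 : p.1 = p'.1 := by
            have := he.1
            rw [h2] at this
            exact add_right_cancel this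
          exact Prod.ext h1 h2
        have hmin_eq : min ((Xh q).card) (c - (Xh q).card) = (Xh q).card := by omega
        have hg := hglue q
        omega
      · -- high case : B = insert q Pf, direct pairs
        set B : Finset (Amb c) := insert q Pf with hB
        have hBne : B.Nonempty := ⟨q, Finset.mem_insert_self _ _⟩
        have hBnu : B ≠ Finset.univ := by
          intro hBu
          have : z0 ∈ B := by rw [hBu]; exact Finset.mem_univ _
          rcases Finset.mem_insert.mp this with hcon | hcon
          · exact hz0.1 hcon
          · rw [hPf_mem] at hcon
            omega
        have hhc := hypercube_cut' hBne hBnu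
        set Dgood : Finset (Amb c × ZMod c) :=
          (hcut B).filter (fun p => ¬(p.1 = q ∧ p.2 ∉ Xh q)) with hD
        have hDcard : (hcut B).card ≤ Dgood.card + (c - (Xh q).card) := by
          have hsplit := Finset.card_filter_add_card_filter_not
            (s := hcut B) (p := fun p : Amb c × ZMod c => ¬(p.1 = q ∧ p.2 ∉ Xh q))
          have hcompl_card : (Finset.univ \ Xh q).card = c - (Xh q).card := by
            rw [Finset.card_sdiff_of_subset (Finset.subset_univ _), Finset.card_univ, ZMod.card]
          have hbad : ((hcut B).filter
              (fun p : Amb c × ZMod c => ¬¬(p.1 = q ∧ p.2 ∉ Xh q))).card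
              ≤ c - (Xh q).card := by
            rw [← hcompl_card]
            apply Finset.card_le_card_of_injOn (fun p => p.2)
            · intro p hp
              rw [Finset.mem_coe, Finset.mem_filter] at hp
              rw [Finset.mem_coe, Finset.mem_sdiff]
              exact ⟨Finset.mem_univ _, (not_not.mp hp.2).2⟩
            · intro p hp p' hp' he
              rw [Finset.mem_coe, Finset.mem_filter] at hp hp'
              exact Prod.ext ((not_not.mp hp.2).1.trans (not_not.mp hp'.2).1.symm) he
          rw [hD]
          omega
        have hdir : Dgood ⊆ Mcross := by
          intro p hp
          rw [hD, Finset.mem_filter] at hp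
          obtain ⟨hpB, hgood⟩ := hp
          rw [hcut, Finset.mem_filter] at hpB
          obtain ⟨-, hp1, hp2⟩ := hpB
          rw [hMcr_mem]
          constructor
          · rcases Finset.mem_insert.mp hp1 with heq' | hP
            · have hXhq : p.2 ∈ Xh q := by
                by_contra hcon
                exact hgood ⟨heq', hcon⟩
              rw [heq']
              exact (hXh_mem q p.2).mp hXhq
            · rw [hPf_mem] at hP
              exact hfull _ hP.2 p.2
          · have hnq : p.1 + eA p.2 ≠ q := by
              intro hcon
              exact hp2 (hcon ▸ Finset.mem_insert_self q Pf)
            have hnP : p.1 + eA p.2 ∉ Pf := fun hcon => hp2 (Finset.mem_insert_of_mem hcon)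
            rcases hdich _ hnq with h0 | hcc
            · exact hempty _ h0 p.2
            · exact absurd ((hPf_mem _).mpr ⟨hnq, hcc⟩) hnP
        have hdircard : Dgood.card ≤ Mcross.card := Finset.card_le_card hdir
        have hmin_eq : min ((Xh q).card) (c - (Xh q).card) = c - (Xh q).card := by omega
        have hg := hglue q
        omega
  · -- Case B : no split cluster
    have hQs0 : Qs = ∅ := Finset.card_eq_zero.mp (by omega)
    have hdich : ∀ w : Amb c, (Xh w).card = 0 ∨ (Xh w).card = c := by
      intro w
      by_contra hcon
      push_neg at hcon
      have hw : w ∈ Qs := (hQs_mem w).mpr ⟨by omega, lt_of_le_of_ne (hcardle w) hcon.2⟩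
      rw [hQs0] at hw
      exact Finset.notMem_empty _ hw
    set Pf : Finset (Amb c) := Finset.univ.filter (fun w => (Xh w).card = c) with hPf
    have hPf_mem : ∀ w : Amb c, w ∈ Pf ↔ (Xh w).card = c := by
      intro w; rw [hPf]; simp only [Finset.mem_filter, Finset.mem_univ, true_and]
    have hPne : Pf.Nonempty := by
      refine ⟨u0.a, (hPf_mem _).mpr ?_⟩
      rcases hdich u0.a with h0 | hcc
      · exact absurd hu0 (hempty u0.a h0 u0.h)
      · exact hcc
    have hPnu : Pf ≠ Finset.univ := by
      intro hPu
      apply hv0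
      have : v0.a ∈ Pf := by rw [hPu]; exact Finset.mem_univ _
      exact hfull v0.a ((hPf_mem _).mp this) v0.h
    have hhc := hypercube_cut' hPne hPnu
    have hsub : hcut Pf ⊆ Mcross := by
      intro p hp
      rw [hcut, Finset.mem_filter] at hp
      obtain ⟨-, hp1, hp2⟩ := hp
      rw [hMcr_mem]
      constructor
      · exact hfull _ ((hPf_mem _).mp hp1) p.2
      · rcases hdich (p.1 + eA p.2) with h0 | hcc
        · exact hempty _ h0 p.2
        · exact absurd ((hPf_mem _).mpr hcc) hp2
    have h1 := Finset.card_le_card hsub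
    have hg := hglue u0.a
    omega


end Lower

end Thm19
end Thm19Aux

/-- Theorem 5.11. For every odd integer `d ≥ 5` and every integer `s`
with `1 ≤ s ≤ d - 3`, there exists a `d`-regular connected Cayley graph `G`
(given by a finite group `Γ` and a symmetric connection set `S` not containing the
identity) such that `λ'(G) = d + s < υ(G)/2`, where `υ(G)` is the order of `G`. -/
theorem exists_cayleyGraph_restrictedEdgeConn_eq
    (d s : ℕ) (hodd : Odd d) (hd : 5 ≤ d) (hs1 : 1 ≤ s) (hs2 : s ≤ d - 3) :
    ∃ (Γ : Type) (_ : Group Γ) (_ : Fintype Γ) (S : Set Γ),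
      (1 : Γ) ∉ S ∧ S = S⁻¹ ∧
      (cayleyGraph S).Connected ∧
      (∀ v : Γ, ((cayleyGraph S).neighborSet v).ncard = d) ∧
      restrictedEdgeConn (cayleyGraph S) = d + s ∧
      2 * (d + s) < Fintype.card Γ := by
  classical
  obtain ⟨m, hm⟩ := hodd
  set r : ℕ := d / 2 with hrdef
  have hd2r : d = 2 * r + 1 := by omega
  set c : ℕ := d + s with hcdef
  have hr : 1 ≤ r := by omega
  have hc1 : 2 * r + 2 ≤ c := by omega
  have hc2 : c ≤ 4 * r - 1 := by omega
  have hrc : 2 * r < c := by omega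
  have hrc1 : r < c := by omega
  haveI : NeZero c := ⟨by omega⟩
  refine ⟨Thm19.W c, inferInstance, inferInstance, Thm19.SS c r, ?_, ?_, ?_, ?_, ?_, ?_⟩
  · -- 1 ∉ S
    intro h1
    exact Thm19.one_not_mem_Sf hrc1 (Finset.mem_coe.mp h1)
  · -- symmetric
    exact Thm19.SS_eq_inv
  · -- connected
    exact Thm19.graph_connected hr hrc1
  · -- d-regular
    intro v
    rw [Thm19.neighborSet_ncard hrc1 v, Thm19.card_Sf hr hrc]
    omega
  · -- restricted edge connectivity
    have hmem : (c : ℕ) ∈ {k | ∃ F : Set (Sym2 (Thm19.W c)),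
        IsRestrictedEdgeCut (cayleyGraph (Thm19.SS c r)) F ∧ F.ncard = k} :=
      ⟨Thm19.F0 c, Thm19.F0_isRestrictedEdgeCut hr hrc1, Thm19.F0_ncard⟩
    have hle : restrictedEdgeConn (cayleyGraph (Thm19.SS c r)) ≤ c := Nat.sInf_le hmem
    have hge : c ≤ restrictedEdgeConn (cayleyGraph (Thm19.SS c r)) := by
      apply le_csInf ⟨c, hmem⟩
      rintro k ⟨F, hF, rfl⟩
      exact Thm19.lower_bound hr hc1 hc2 hF
    omega
  · -- order
    have hcard : Fintype.card (Thm19.W c) = 2 ^ c * c := by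
      rw [Fintype.card_congr (Thm19.wEquiv c), Fintype.card_prod, Fintype.card_fun,
        ZMod.card, ZMod.card]
    rw [hcard]
    have h2c : 2 < 2 ^ c := by
      calc 2 = 2 ^ 1 := (pow_one 2).symm
      _ < 2 ^ c := Nat.pow_lt_pow_right one_lt_two (by omega)
    calc 2 * (d + s) = 2 * c := by omega
    _ < 2 ^ c * c := Nat.mul_lt_mul_of_lt_of_le h2c (le_refl c) (by omega)
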